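/- The commutative square with corners R, R_f, R̂, R̂_f (maps: localization R → R_f, completion ι : R → R̂, and the canonical maps R_f → R̂_f and R̂ → R̂_f) is Cartesian: the induced ring homomorphism from R to the fiber product R_f ×_{R̂_f} R̂ = {(a, b) ∈ R_f × R̂ : a and b have the same image in R̂_f} is an isomorphism. -/

import Mathlib

noncomputable section

variable (R : Type*) [CommRing R] (f : R)

/-- The `(f)`-adic completion `R̂` of `R`. -/
abbrev Rhat : Type _ := AdicCompletion (Ideal.span {f}) R

/-- The localization `R_f = R[f⁻¹]`. -/
abbrev Rf : Type _ := Localization.Away f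

/-- The localization `R̂_f = R̂[ι(f)⁻¹]`. -/
abbrev Rhatf : Type _ := Localization.Away (algebraMap R (Rhat R f) f)

/-- The canonical ring map `R_f → R̂_f` extending `ι : R → R̂`. -/
noncomputable def psi : Rf R f →+* Rhatf R f :=
  Localization.awayMap (algebraMap R (Rhat R f)) f

namespace BLaux

variable {R f}

lemma mem_aux (n : ℕ) (x : R) :
    x ∈ ((Ideal.span {f}) ^ n • ⊤ : Ideal R) ↔ f ^ n ∣ x := by
  rw [smul_eq_mul, Ideal.mul_top, Ideal.span_singleton_pow, Ideal.mem_span_singleton]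

lemma val_algebraMap (r : R) (n : ℕ) :
    ((algebraMap R (Rhat R f)) r).val n = Submodule.Quotient.mk r := rfl

/-- `ι f` is a nonzerodivisor in `R̂`. -/
lemma nzd (hf : f ∈ nonZeroDivisors R) :
    algebraMap R (Rhat R f) f ∈ nonZeroDivisors (Rhat R f) := by
  rw [mem_nonZeroDivisors_iff_right]
  intro b hb
  ext n
  rw [AdicCompletion.val_zero_apply]
  obtain ⟨c, hc⟩ := Submodule.Quotient.mk_surjective _ (b.val (n + 1))
  have h1 : (b * algebraMap R (Rhat R f) f).val (n + 1) = 0 := by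
    rw [hb, AdicCompletion.val_zero_apply]
  rw [AdicCompletion.val_mul, val_algebraMap, ← hc] at h1
  have h2 : (Submodule.Quotient.mk (c * f) :
      R ⧸ ((Ideal.span {f}) ^ (n + 1) • ⊤ : Ideal R)) = 0 := h1
  rw [Submodule.Quotient.mk_eq_zero, mem_aux] at h2
  obtain ⟨d, hd⟩ := h2
  have h0 : (c - f ^ n * d) * f = 0 := by
    rw [sub_mul, hd, pow_succ]; ring
  have hcd : c = f ^ n * d := by
    have := (mem_nonZeroDivisors_iff_right.mp hf) _ h0
    linear_combination this
  have := b.property (Nat.le_succ n)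
  rw [← hc] at this
  change (Submodule.Quotient.mk c : R ⧸ ((Ideal.span {f}) ^ n • ⊤ : Submodule R R)) = _ at this
  rw [← this, Submodule.Quotient.mk_eq_zero, mem_aux]
  exact ⟨d, hcd⟩

/-- If `ι r` is divisible by `ι f ^ n` in `R̂` then `f ^ n ∣ r` in `R`. -/
lemma dvd_of (n : ℕ) (r : R) (b : Rhat R f)
    (h : (algebraMap R (Rhat R f) f) ^ n * b = algebraMap R (Rhat R f) r) :
    f ^ n ∣ r := by
  have h2 := congrArg (AdicCompletion.evalₐ (Ideal.span {f}) n) h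
  rw [map_mul, map_pow, AlgHom.commutes, AlgHom.commutes] at h2
  have h3 : (algebraMap R (R ⧸ (Ideal.span {f}) ^ n)) f ^ n = 0 := by
    rw [← map_pow, Ideal.Quotient.algebraMap_eq, Ideal.Quotient.eq_zero_iff_mem,
      Ideal.span_singleton_pow]
    exact Ideal.mem_span_singleton_self _
  rw [h3, zero_mul] at h2
  rw [← Ideal.mem_span_singleton, ← Ideal.span_singleton_pow,
    ← Ideal.Quotient.eq_zero_iff_mem, ← Ideal.Quotient.algebraMap_eq]
  exact h2.symm

end BLaux

/-- the square `R, R_f, R̂, R̂_f` is Cartesian: the induced map from `R` to the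
fiber product `{(a, b) ∈ R_f × R̂ : a and b have the same image in R̂_f}` is bijective, i.e.
the map `r ↦ (r/1, ι r)` is injective with range exactly the fiber product. -/
theorem stmt1 [IsNoetherianRing R] (hf : f ∈ nonZeroDivisors R) :
    Function.Injective
      (fun r : R => ((algebraMap R (Rf R f)) r, (algebraMap R (Rhat R f)) r)) ∧
    Set.range (fun r : R => ((algebraMap R (Rf R f)) r, (algebraMap R (Rhat R f)) r)) =
      {p : Rf R f × Rhat R f | psi R f p.1 = algebraMap (Rhat R f) (Rhatf R f) p.2} := by
  have hpow : Submonoid.powers f ≤ nonZeroDivisors R := by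
    rintro x ⟨n, rfl⟩; exact pow_mem hf n
  have hinj : Function.Injective (algebraMap R (Rf R f)) :=
    IsLocalization.injective _ hpow
  have hnzd := BLaux.nzd hf
  set g := algebraMap R (Rhat R f) with hg
  have hpsi : ∀ r : R, psi R f (algebraMap R (Rf R f) r)
      = algebraMap (Rhat R f) (Rhatf R f) (g r) := fun r =>
    IsLocalization.map_eq (T := Submonoid.powers (g f)) (Q := Rhatf R f)
      (by rintro x ⟨n, rfl⟩; exact ⟨n, by simp [hg]⟩) r
  constructor
  · intro a b h
    exact hinj (congrArg Prod.fst h)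
  · ext p
    constructor
    · rintro ⟨r, rfl⟩
      exact hpsi r
    · intro hp
      obtain ⟨⟨r, s⟩, hrs⟩ := IsLocalization.surj (Submonoid.powers f) p.1
      obtain ⟨n, hn⟩ := s.2
      simp only at hrs
      -- apply psi
      have h1 : algebraMap (Rhat R f) (Rhatf R f) (p.2 * g s)
          = algebraMap (Rhat R f) (Rhatf R f) (g r) := by
        rw [map_mul, ← hp, ← hpsi s, ← hpsi r, ← map_mul, hrs]
      obtain ⟨c, hc⟩ := (IsLocalization.eq_iff_exists (Submonoid.powers (g f)) _).mp h1
      obtain ⟨m, hm⟩ := c.2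
      have hcnzd : (c : Rhat R f) ∈ nonZeroDivisors (Rhat R f) := by
        rw [← hm]; exact pow_mem hnzd m
      have h2 : p.2 * g s = g r :=
        (mul_cancel_left_mem_nonZeroDivisors hcnzd).mp hc
      have h3 : (g f) ^ n * p.2 = g r := by
        rw [← h2, ← hn, map_pow]; ring
      obtain ⟨t, ht⟩ := BLaux.dvd_of n r p.2 h3
      have hb : p.2 = g t := by
        rw [← mul_cancel_left_mem_nonZeroDivisors (pow_mem hnzd n)]
        rw [h3, ht, map_mul, map_pow]
      have ha : p.1 = algebraMap R (Rf R f) t := by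
        have hu : IsUnit (algebraMap R (Rf R f) (s : R)) :=
          IsLocalization.map_units _ s
        apply hu.mul_left_cancel
        rw [mul_comm, hrs, ht, ← hn, map_mul, map_pow, mul_comm]
      exact ⟨t, Prod.ext ha.symm hb.symm⟩
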